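/- Let F_q be a finite field, m ≥ 1, and 0 ≤ ℓ < q−1. The toric code C_{P_ℓ(m)} over F_q, obtained by evaluating the span of all monomials x_1^{e_1}···x_m^{e_m} with e_i ≥ 0 and e_1 + ... + e_m ≤ ℓ at all points of (F_q^*)^m, has minimum distance exactly (q−1)^m − ℓ(q−1)^{m−1}. -/

import Mathlib

open MvPolynomial Finset

lemma sz_aux : ∀ (n : ℕ) {F : Type*} [Field F] [Fintype F] [DecidableEq F] (S : Finset F)
    (f : MvPolynomial (Fin n) F), f ≠ 0 →
    ((Fintype.piFinset fun _ : Fin n => S).filter (fun x => eval x f = 0)).card * S.card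
      ≤ f.totalDegree * S.card ^ n := by
  intro n
  induction n with
  | zero =>
    intro F _ _ _ S f hf
    have h0 : ((Fintype.piFinset fun _ : Fin 0 => S).filter (fun x => eval x f = 0)) = ∅ := by
      apply Finset.filter_false_of_mem
      intro x _
      have hC : f = C (constantCoeff f) := eq_C_of_isEmpty f
      rw [hC]
      simp only [eval_C]
      intro h
      exact hf (by rw [hC, h, map_zero])
    rw [h0]
    simp
  | succ n ih =>
    intro F _ _ _ S f hf
    set F' := finSuccEquiv F n f with hF'def
    have hF' : F' ≠ 0 := by
      simp only [hF'def, ne_eq, EmbeddingLike.map_eq_zero_iff]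
      exact hf
    set d0 := F'.natDegree with hd0
    set g := F'.leadingCoeff with hgdef
    have hgne : g ≠ 0 := Polynomial.leadingCoeff_ne_zero.mpr hF'
    have hgdeg : g.totalDegree + d0 ≤ f.totalDegree :=
      totalDegree_coeff_finSuccEquiv_add_le f d0 hgne
    have hd0le : d0 ≤ f.totalDegree := by
      rw [hd0, natDegree_finSuccEquiv]
      exact degreeOf_le_totalDegree f 0
    set T := Fintype.piFinset fun _ : Fin n => S with hT
    have hTcard : T.card = S.card ^ n := by
      simp [hT, Fintype.card_piFinset]
    set Z := (Fintype.piFinset fun _ : Fin (n+1) => S).filter (fun x => eval x f = 0) with hZ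
    -- fiberwise count
    have hfib : Z.card = ∑ t ∈ T, (Z.filter (fun x => Fin.tail x = t)).card := by
      apply Finset.card_eq_sum_card_fiberwise
      intro x hx
      simp only [hZ, Finset.mem_coe, Finset.mem_filter, Fintype.mem_piFinset] at hx
      simp only [hT, Finset.mem_coe, Fintype.mem_piFinset]
      intro i
      exact hx.1 _
    have hfibcard : ∀ t ∈ T, (Z.filter (fun x => Fin.tail x = t)).card
        = (S.filter fun a => eval (Fin.cons a t) f = 0).card := by
      intro t ht
      apply Finset.card_bij' (fun x _ => x 0) (fun a _ => Fin.cons a t)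
      · intro x hx
        simp only [Finset.mem_filter] at hx
        rw [← hx.2, Fin.cons_self_tail]
      · intro a ha
        simp
      · intro x hx
        simp only [Finset.mem_filter, hZ, Fintype.mem_piFinset] at hx
        obtain ⟨⟨h1, h2⟩, h3⟩ := hx
        simp only [Finset.mem_filter]
        refine ⟨h1 0, ?_⟩
        rw [← h3, Fin.cons_self_tail]
        exact h2
      · intro a ha
        simp only [Finset.mem_filter] at ha
        simp only [Finset.mem_filter, hZ, Fintype.mem_piFinset]
        simp only [hT, Fintype.mem_piFinset] at ht
        refine ⟨⟨?_, ha.2⟩, by simp⟩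
        intro i
        refine Fin.cases ?_ ?_ i
        · simpa using ha.1
        · intro j; simpa using ht j
    rw [hfib, Finset.sum_congr rfl hfibcard]
    -- split
    rw [← Finset.sum_filter_add_sum_filter_not T (fun t => eval t g = 0)]
    have hbound1 : ∑ t ∈ T.filter (fun t => eval t g = 0),
        (S.filter fun a => eval (Fin.cons a t) f = 0).card
        ≤ g.totalDegree * S.card ^ n := by
      calc ∑ t ∈ T.filter (fun t => eval t g = 0),
            (S.filter fun a => eval (Fin.cons a t) f = 0).card
          ≤ ∑ _t ∈ T.filter (fun t => eval t g = 0), S.card :=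
            Finset.sum_le_sum (fun t _ => Finset.card_filter_le _ _)
        _ = (T.filter (fun t => eval t g = 0)).card * S.card := by
            rw [Finset.sum_const, smul_eq_mul]
        _ ≤ g.totalDegree * S.card ^ n := ih S g hgne
    have hbound2 : ∑ t ∈ T.filter (fun t => ¬ eval t g = 0),
        (S.filter fun a => eval (Fin.cons a t) f = 0).card ≤ S.card ^ n * d0 := by
      have perterm : ∀ t ∈ T.filter (fun t => ¬ eval t g = 0),
          (S.filter fun a => eval (Fin.cons a t) f = 0).card ≤ d0 := by
        intro t ht
        simp only [Finset.mem_filter] at ht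
        set p := F'.map (eval t) with hp
        have hcoe : F'.coeff d0 = g := rfl
        have hpd : p.coeff d0 ≠ 0 := by
          rw [hp, coeff_eval_eq_eval_coeff, hcoe]
          exact ht.2
        have hp0 : p ≠ 0 := fun h => hpd (by simp [h])
        have hsub : S.filter (fun a => eval (Fin.cons a t) f = 0) ⊆ p.roots.toFinset := by
          intro a ha
          simp only [Finset.mem_filter] at ha
          rw [Multiset.mem_toFinset, Polynomial.mem_roots hp0]
          show p.eval a = 0
          rw [hp, ← eval_eq_eval_mv_eval']
          exact ha.2
        calc (S.filter fun a => eval (Fin.cons a t) f = 0).card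
            ≤ p.roots.toFinset.card := Finset.card_le_card hsub
          _ ≤ Multiset.card p.roots := Multiset.toFinset_card_le _
          _ ≤ p.natDegree := Polynomial.card_roots' p
          _ ≤ d0 := Polynomial.natDegree_map_le
      calc ∑ t ∈ T.filter (fun t => ¬ eval t g = 0),
            (S.filter fun a => eval (Fin.cons a t) f = 0).card
          ≤ ∑ _t ∈ T.filter (fun t => ¬ eval t g = 0), d0 := Finset.sum_le_sum perterm
        _ = (T.filter (fun t => ¬ eval t g = 0)).card * d0 := by
            rw [Finset.sum_const, smul_eq_mul]
        _ ≤ T.card * d0 := Nat.mul_le_mul_right _ (Finset.card_filter_le _ _)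
        _ = S.card ^ n * d0 := by rw [hTcard]
    have hsum : (∑ t ∈ T.filter (fun t => eval t g = 0),
          (S.filter fun a => eval (Fin.cons a t) f = 0).card)
        + ∑ t ∈ T.filter (fun t => ¬ eval t g = 0),
          (S.filter fun a => eval (Fin.cons a t) f = 0).card
        ≤ f.totalDegree * S.card ^ n := by
      calc _ ≤ g.totalDegree * S.card ^ n + S.card ^ n * d0 := add_le_add hbound1 hbound2
        _ = (g.totalDegree + d0) * S.card ^ n := by ring
        _ ≤ f.totalDegree * S.card ^ n := Nat.mul_le_mul_right _ hgdeg
    calc _ ≤ f.totalDegree * S.card ^ n * S.card := Nat.mul_le_mul_right _ hsum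
      _ = f.totalDegree * S.card ^ (n+1) := by ring

open Finset

lemma card_coord_filter {α ι : Type*} [Fintype α] [DecidableEq α] [Fintype ι] [DecidableEq ι]
    (i0 : ι) (B : Finset α) :
    (Finset.univ.filter (fun p : ι → α => p i0 ∈ B)).card
      = B.card * Fintype.card α ^ (Fintype.card ι - 1) := by
  have hfiber : ∀ b : α, (Finset.univ.filter (fun p : ι → α => p i0 = b)).card
      = Fintype.card α ^ (Fintype.card ι - 1) := by
    intro b
    rw [← Fintype.card_subtype]
    have e : {p : ι → α // p i0 = b} ≃ ({j : ι // j ≠ i0} → α) :=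
      { toFun := fun p j => p.1 j.1
        invFun := fun q => ⟨fun j => if h : j = i0 then b else q ⟨j, h⟩, by simp⟩
        left_inv := by
          rintro ⟨p, hp⟩
          ext j
          dsimp only
          split
          · next h => rw [h, hp]
          · rfl
        right_inv := by
          intro q
          ext j
          simp [j.2] }
    rw [Fintype.card_congr e, Fintype.card_fun]
    congr 1
    have : Fintype.card {j : ι // j ≠ i0} = Fintype.card ι - Fintype.card {j : ι // j = i0} :=
      Fintype.card_subtype_compl _
    rw [this, Fintype.card_subtype_eq]
  rw [Finset.card_eq_sum_card_fiberwise (f := fun p : ι → α => p i0) (t := B)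
    (s := Finset.univ.filter (fun p : ι → α => p i0 ∈ B))
    (fun p hp => (Finset.mem_filter.mp (Finset.mem_coe.mp hp)).2)]
  rw [Finset.sum_congr rfl (fun b _ => ?_), Finset.sum_const, smul_eq_mul]
  rw [Finset.filter_filter]
  rw [← hfiber b]
  congr 1
  apply Finset.filter_congr
  intro p _
  constructor
  · exact fun h => h.2
  · intro h
    exact ⟨by simpa [h] using (by assumption : b ∈ B), h⟩

open MvPolynomial Finset in

/-- The toric code of the standard simplex `P_ℓ(m) = conv{0, ℓe₁, ..., ℓe_m}` over `F_q`
(evaluating all monomials of total degree at most `ℓ`) has minimum distance exactly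
`(q-1)^m - ℓ(q-1)^{m-1}`. -/
theorem simplex_toric_code_min_dist {F : Type*} [Field F] [Fintype F]
    (q m l : ℕ) (hm : 1 ≤ m) (hq : Fintype.card F = q) (hl : l < q - 1)
    (C : Set ((Fin m → Fˣ) → F))
    (hC : C = {w | ∃ c : {e : Fin m → Fin (l + 1) // ∑ i, ((e i : ℕ)) ≤ l} → F,
      w = fun p => ∑ e, c e * ∏ i, (p i : F) ^ ((e : Fin m → Fin (l + 1)) i : ℕ)}) :
    (∀ w ∈ C, w ≠ 0 → (q - 1) ^ m - l * (q - 1) ^ (m - 1) ≤ {p | w p ≠ 0}.ncard) ∧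
    (∃ w ∈ C, w ≠ 0 ∧ {p | w p ≠ 0}.ncard = (q - 1) ^ m - l * (q - 1) ^ (m - 1)) := by
  classical
  have hunits : Fintype.card Fˣ = q - 1 := by rw [Fintype.card_units, hq]
  set S : Finset F := Finset.univ.map ⟨Units.val, Units.val_injective⟩ with hSdef
  have hS : S.card = q - 1 := by simp [hSdef, hunits]
  have hqpos : 0 < q - 1 := Nat.pos_of_ne_zero (by omega)
  have hcardfun : Fintype.card (Fin m → Fˣ) = (q-1)^m := by
    rw [Fintype.card_fun, hunits, Fintype.card_fin]
  have hncard : ∀ w : (Fin m → Fˣ) → F,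
      {p | w p ≠ 0}.ncard = (univ.filter fun p => w p ≠ 0).card := by
    intro w
    rw [Set.ncard_eq_toFinset_card', Set.toFinset_setOf]
  have hpowsplit : (q-1) ^ m = (q-1) ^ (m-1) * (q-1) := by
    conv_lhs => rw [← Nat.sub_add_cancel hm, pow_succ]
  constructor
  · -- lower bound
    intro w hw hw0
    rw [hC] at hw
    obtain ⟨c, hwc⟩ := hw
    set expo : (Fin m → Fin (l+1)) → (Fin m →₀ ℕ) :=
      fun e => Finsupp.equivFunOnFinite.symm (fun i => (e i : ℕ)) with hexpo
    set f : MvPolynomial (Fin m) F :=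
      ∑ e : {e : Fin m → Fin (l + 1) // ∑ i, ((e i : ℕ)) ≤ l}, monomial (expo e.1) (c e) with hfdef
    have heval : ∀ x : Fin m → F,
        eval x f = ∑ e, c e * ∏ i, x i ^ ((e : Fin m → Fin (l + 1)) i : ℕ) := by
      intro x
      rw [hfdef, map_sum]
      refine Finset.sum_congr rfl fun e _ => ?_
      rw [eval_monomial]
      congr 1
      rw [Finsupp.prod_pow]
      refine Finset.prod_congr rfl fun i _ => ?_
      simp [hexpo]
    have hwe : ∀ p : Fin m → Fˣ, w p = eval (fun i => ((p i : F))) f := by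
      intro p
      rw [heval, hwc]
    have hf0 : f ≠ 0 := by
      obtain ⟨p, hp⟩ := Function.ne_iff.mp hw0
      intro h
      apply hp
      rw [hwe, h, map_zero]
      rfl
    have htd : f.totalDegree ≤ l := by
      refine le_trans (totalDegree_finset_sum _ _) (Finset.sup_le fun e _ => ?_)
      refine le_trans (totalDegree_monomial_le _ _) ?_
      have h1 : ((expo e.1).sum fun _ => id) = ∑ i, ((e.1 i : ℕ)) := by
        rw [Finsupp.sum_fintype]
        · simp [hexpo]
        · intro; rfl
      rw [h1]
      exact e.2
    have hz := sz_aux m S f hf0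
    have hcount : (univ.filter fun p : Fin m → Fˣ => w p = 0).card
        = ((Fintype.piFinset fun _ : Fin m => S).filter fun x => eval x f = 0).card := by
      apply Finset.card_bij (fun p _ => fun i => ((p i : F)))
      · intro p hp
        simp only [Finset.mem_filter, Fintype.mem_piFinset]
        refine ⟨fun i => by simp [hSdef], ?_⟩
        rw [← hwe]
        exact (Finset.mem_filter.mp hp).2
      · intro p _ p' _ h
        funext i
        exact Units.ext (congrFun h i)
      · intro x hx
        simp only [Finset.mem_filter, Fintype.mem_piFinset] at hx
        have hxu : ∀ i, ∃ u : Fˣ, (u : F) = x i := by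
          intro i
          have := hx.1 i
          simpa [hSdef] using this
        choose u hu using hxu
        refine ⟨u, ?_, funext hu⟩
        simp only [Finset.mem_filter, Finset.mem_univ, true_and]
        rw [hwe]
        have hux : (fun i => ((u i : F))) = x := funext hu
        rw [hux]
        exact hx.2
    have hzero_le : (univ.filter fun p : Fin m → Fˣ => w p = 0).card ≤ l * (q-1)^(m-1) := by
      apply Nat.le_of_mul_le_mul_right _ hqpos
      calc (univ.filter fun p : Fin m → Fˣ => w p = 0).card * (q-1)
          = ((Fintype.piFinset fun _ : Fin m => S).filter fun x => eval x f = 0).card * S.card := by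
            rw [hcount, hS]
        _ ≤ f.totalDegree * S.card ^ m := hz
        _ ≤ l * (q-1) ^ m := by rw [hS]; exact Nat.mul_le_mul_right _ htd
        _ = l * (q-1)^(m-1) * (q-1) := by rw [hpowsplit, mul_assoc]
    have hsplit := Finset.card_filter_add_card_filter_not
      (s := (univ : Finset (Fin m → Fˣ))) (p := fun p => w p = 0)
    rw [Finset.card_univ, hcardfun] at hsplit
    have hne : (univ.filter fun p : Fin m → Fˣ => ¬ w p = 0)
        = (univ.filter fun p => w p ≠ 0) := rfl
    rw [hne] at hsplit
    rw [hncard]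
    omega
  · -- upper bound: product of linear factors in first variable
    set i0 : Fin m := ⟨0, hm⟩ with hi0
    obtain ⟨A, -, hAcard⟩ := Finset.exists_subset_card_eq (s := (univ : Finset Fˣ)) (n := l)
      (by rw [Finset.card_univ, hunits]; omega)
    set P : Polynomial F := ∏ a ∈ A, (Polynomial.X - Polynomial.C (a:F)) with hP
    have hPdeg : P.natDegree = l := by
      rw [hP, Polynomial.natDegree_prod _ _ (fun a _ => Polynomial.X_sub_C_ne_zero _)]
      simp [hAcard]
    have hPeval : ∀ x : F, P.eval x = ∏ a ∈ A, (x - (a:F)) := by simp [hP, Polynomial.eval_prod]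
    set c : {e : Fin m → Fin (l + 1) // ∑ i, ((e i : ℕ)) ≤ l} → F :=
      fun e => if (∀ i, i ≠ i0 → (e : Fin m → Fin (l+1)) i = 0)
        then P.coeff (((e : Fin m → Fin (l+1)) i0 : ℕ)) else 0 with hc
    set ν : Fin (l+1) → (Fin m → Fin (l+1)) := fun k i => if i = i0 then k else 0 with hν
    have hν_zero : ∀ k, ∀ i, i ≠ i0 → ν k i = 0 := by
      intro k i hi; simp [hν, hi]
    have hν_sum : ∀ k, ∑ i, ((ν k i : ℕ)) ≤ l := by
      intro k
      rw [Finset.sum_eq_single i0 (fun i _ hi => by simp [hν_zero k i hi]) (by simp)]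
      simp only [hν, if_pos rfl]
      exact Nat.lt_succ_iff.mp k.isLt
    set E : Fin (l+1) → {e : Fin m → Fin (l + 1) // ∑ i, ((e i : ℕ)) ≤ l} :=
      fun k => ⟨ν k, hν_sum k⟩ with hE
    have hEinj : Function.Injective E := by
      intro k k' h
      have := congrFun (congrArg Subtype.val h) i0
      simpa [hE, hν] using this
    set w : (Fin m → Fˣ) → F :=
      fun p => ∑ e, c e * ∏ i, ((p i : F)) ^ ((e : Fin m → Fin (l + 1)) i : ℕ) with hwdef
    have key : ∀ p : Fin m → Fˣ, w p = P.eval ((p i0 : F)) := by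
      intro p
      have hout : ∀ e ∈ (univ : Finset {e : Fin m → Fin (l + 1) // ∑ i, ((e i : ℕ)) ≤ l}),
          e ∉ univ.map ⟨E, hEinj⟩ →
          c e * ∏ i, ((p i : F)) ^ ((e : Fin m → Fin (l + 1)) i : ℕ) = 0 := by
        intro e _ he
        have hcond : ¬ (∀ i, i ≠ i0 → (e : Fin m → Fin (l+1)) i = 0) := by
          intro hcond
          apply he
          rw [Finset.mem_map]
          refine ⟨(e : Fin m → Fin (l+1)) i0, Finset.mem_univ _, ?_⟩
          apply Subtype.ext
          funext i
          by_cases hi : i = i0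
          · subst hi; simp [hE, hν]
          · simp [hE, hν, hi, hcond i hi]
        rw [hc]
        simp only [if_neg hcond, zero_mul]
      rw [hwdef]
      dsimp only
      rw [← Finset.sum_subset (Finset.subset_univ (univ.map ⟨E, hEinj⟩)) hout, Finset.sum_map]
      have hterm : ∀ k : Fin (l+1),
          c (E k) * ∏ i, ((p i : F)) ^ ((ν k) i : ℕ) = P.coeff (k : ℕ) * ((p i0 : F)) ^ (k : ℕ) := by
        intro k
        have h1 : c (E k) = P.coeff (k : ℕ) := by
          rw [hc]
          simp only [hE]
          rw [if_pos (hν_zero k)]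
          simp [hν]
        have h2 : ∏ i, ((p i : F)) ^ ((ν k) i : ℕ) = ((p i0 : F)) ^ (k : ℕ) := by
          rw [Finset.prod_eq_single i0 (fun i _ hi => by simp [hν_zero k i hi]) (by simp)]
          simp [hν]
        rw [h1, h2]
      simp only [Function.Embedding.coeFn_mk, hE]
      rw [Finset.sum_congr rfl (fun k _ => hterm k)]
      rw [Fin.sum_univ_eq_sum_range (fun j => P.coeff j * ((p i0 : F)) ^ j)]
      exact (Polynomial.eval_eq_sum_range' (by rw [hPdeg]; exact Nat.lt_succ_self l) _).symm
    have hwne : ∀ p : Fin m → Fˣ, (w p ≠ 0 ↔ p i0 ∉ A) := by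
      intro p
      rw [key, hPeval, Finset.prod_ne_zero_iff]
      constructor
      · intro h hmem
        have := h (p i0) hmem
        simp at this
      · intro h a ha heq
        apply h
        have : ((p i0 : F)) = (a : F) := by
          have := sub_eq_zero.mp heq
          exact this
        rwa [Units.ext this]
    have hAne : ∃ b : Fˣ, b ∉ A := by
      have hlt : A.card < (univ : Finset Fˣ).card := by
        rw [Finset.card_univ, hunits, hAcard]; omega
      have hcc : (Aᶜ : Finset Fˣ).Nonempty := by
        rw [← Finset.card_pos, Finset.card_compl, hunits, hAcard]
        omega
      obtain ⟨b, hb⟩ := hcc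
      exact ⟨b, Finset.mem_compl.mp hb⟩
    obtain ⟨b, hb⟩ := hAne
    refine ⟨w, by rw [hC]; exact ⟨c, rfl⟩, ?_, ?_⟩
    · intro h0
      exact ((hwne (fun _ => b)).mpr hb) (congrFun h0 (fun _ => b))
    · rw [hncard]
      have hfilt : (univ.filter fun p : Fin m → Fˣ => w p ≠ 0)
          = univ.filter (fun p => p i0 ∈ Aᶜ) := by
        apply Finset.filter_congr
        intro p _
        rw [Finset.mem_compl]
        exact hwne p
      rw [hfilt, card_coord_filter, Finset.card_compl, hAcard, hunits, Fintype.card_fin]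
      calc ((q-1) - l) * (q-1)^(m-1)
          = (q-1)*(q-1)^(m-1) - l * (q-1)^(m-1) := Nat.sub_mul _ _ _
        _ = (q-1)^m - l * (q-1)^(m-1) := by rw [mul_comm ((q:ℕ)-1), ← hpowsplit]
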